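/- Let f be a homeomorphism of a compact metric space K. If there exists a strictly positive nonatomic Borel probability measure μ (i.e., supp(μ) = K) compatible with inverse shadowing for f, then f has the inverse shadowing property: for every ε > 0 there exists d > 0 such that for every point p ∈ K and every d-method g for f there exists a trajectory {x_k}_{k∈ℤ} of g with dist(x_k, f^k(p)) ≤ ε for all k ∈ ℤ. -/

import Mathlib

open MeasureTheory Filter Topology

/-- `Φ(ε,d,f)`: the set of points `p` such that for every `d`-method `g = {g_k}_{k∈ℤ}` for the
homeomorphism `f` there exists a full trajectory of `g` that `ε`-traces the `f`-orbit of `p`.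
(Here `f.toEquiv ^ k` is the `k`-th iterate of `f`, `k ∈ ℤ`.) -/
def Phi {K : Type*} [MetricSpace K] (f : K ≃ₜ K) (ε d : ℝ) : Set K :=
  {p | ∀ g : ℤ → K → K, (∀ k, Continuous (g k)) → (∀ k z, dist (g k z) (f z) ≤ d) →
    ∃ x : ℤ → K, (∀ k, x (k + 1) = g k (x k)) ∧ ∀ k : ℤ, dist (x k) ((f.toEquiv ^ k) p) ≤ ε}

/-- Corollary 4.1. Let `f` be a homeomorphism of a compact metric space `K`.
If there is a strictly positive (every nonempty open set has positive measure) nonatomic Borel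
probability measure `μ` compatible with inverse shadowing for `f`, then `f` has the inverse
shadowing property: for every `ε > 0` there is `d > 0` such that for every point `p` and
every `d`-method `g` for `f` there is a full trajectory of `g` that `ε`-traces the `f`-orbit
of `p`. -/
theorem stmt15 {K : Type*} [MetricSpace K] [CompactSpace K] [MeasurableSpace K] [BorelSpace K]
    (f : K ≃ₜ K) (μ : Measure K) [IsProbabilityMeasure μ] [MeasureTheory.NullSingletonClass μ]
    (hpos : ∀ U : Set K, IsOpen U → U.Nonempty → 0 < μ U)
    (hcompat : ∀ ε > (0 : ℝ), ∃ d > (0 : ℝ), ∀ A : Set K, 0 < μ A →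
      (A ∩ Phi f ε d).Nonempty) :
    ∀ ε > (0 : ℝ), ∃ d > (0 : ℝ), ∀ p : K, ∀ g : ℤ → K → K,
      (∀ k, Continuous (g k)) → (∀ k z, dist (g k z) (f z) ≤ d) →
      ∃ x : ℤ → K, (∀ k, x (k + 1) = g k (x k)) ∧ ∀ k : ℤ, dist (x k) ((f.toEquiv ^ k) p) ≤ ε := by
  intro ε hε
  obtain ⟨d, hd, hΦ⟩ := hcompat (ε / 2) (by linarith)
  refine ⟨d, hd, ?_⟩
  intro p g hgc hgd
  -- choose points q n ∈ Φ(ε/2, d) with dist (q n) p < 1/(n+1)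
  have hball : ∀ n : ℕ, ∃ q, q ∈ Metric.ball p (1 / (n + 1)) ∩ Phi f (ε / 2) d := by
    intro n
    have h1 : (0 : ℝ) < 1 / (n + 1) := by positivity
    exact hΦ _ (hpos _ Metric.isOpen_ball ⟨p, Metric.mem_ball_self h1⟩)
  choose q hq using hball
  have hq1 : ∀ n : ℕ, dist (q n) p < 1 / (n + 1) := fun n => (hq n).1
  have hq2 : ∀ n : ℕ, q n ∈ Phi f (ε / 2) d := fun n => (hq n).2
  choose X hX1 hX2 using fun n => hq2 n g hgc hgd
  -- q n → p
  have hqp : Tendsto q atTop (𝓝 p) := by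
    rw [tendsto_iff_dist_tendsto_zero]
    exact squeeze_zero (fun n => dist_nonneg) (fun n => (hq1 n).le)
      tendsto_one_div_add_atTop_nhds_zero_nat
  -- take a limit trajectory along a free ultrafilter
  set u : Ultrafilter ℕ := Ultrafilter.of atTop with hu_def
  have hu : (u : Filter ℕ) ≤ atTop := Ultrafilter.of_le _
  obtain ⟨x, -, hx⟩ := (isCompact_univ (X := ℤ → K)).ultrafilter_le_nhds (u.map X)
    (by simp)
  have hx' : Tendsto X u (𝓝 x) := hx
  have hxk : ∀ k : ℤ, Tendsto (fun n => X n k) u (𝓝 (x k)) := fun k =>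
    (tendsto_pi_nhds.1 hx' k)
  refine ⟨x, ?_, ?_⟩
  · intro k
    have h1 : Tendsto (fun n => X n (k + 1)) u (𝓝 (x (k + 1))) := hxk (k + 1)
    have h2 : Tendsto (fun n => g k (X n k)) u (𝓝 (g k (x k))) :=
      ((hgc k).tendsto (x k)).comp (hxk k)
    have heq : (fun n => X n (k + 1)) = fun n => g k (X n k) := by
      funext n; exact hX1 n k
    rw [heq] at h1
    exact tendsto_nhds_unique h1 h2
  · intro k
    have hcont : Continuous ((f.toEquiv ^ k : Equiv.Perm K) : K → K) := by
      induction k using Int.induction_on with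
      | zero => simpa using continuous_id
      | succ n ih =>
          have h : (f.toEquiv ^ ((n : ℤ) + 1) : Equiv.Perm K)
              = (f.toEquiv ^ (n : ℤ)) * f.toEquiv := zpow_add_one _ _
          rw [h, Equiv.Perm.coe_mul]
          exact ih.comp f.continuous
      | pred n ih =>
          have h : (f.toEquiv ^ (-(n : ℤ) - 1) : Equiv.Perm K)
              = (f.toEquiv ^ (-(n : ℤ))) * f.toEquiv⁻¹ := zpow_sub_one _ _
          have hinv : ⇑(f.toEquiv⁻¹ : Equiv.Perm K) = ⇑f.symm := rfl
          rw [h, Equiv.Perm.coe_mul, hinv]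
          exact ih.comp f.symm.continuous
    have h2 : Tendsto (fun n => (f.toEquiv ^ k) (q n)) u (𝓝 ((f.toEquiv ^ k) p)) :=
      (hcont.tendsto p).comp (hqp.mono_left hu)
    have h3 : Tendsto (fun n => dist (X n k) ((f.toEquiv ^ k) (q n))) u
        (𝓝 (dist (x k) ((f.toEquiv ^ k) p))) := (hxk k).dist h2
    have h4 : dist (x k) ((f.toEquiv ^ k) p) ≤ ε / 2 :=
      le_of_tendsto h3 (Eventually.of_forall fun n => hX2 n k)
    linarith
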